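/- Discrete time-BV bound for the averaged density: let ρ_Δ be generated by the conservative scheme ρ_{j+1/2}^{n+1} = ρ_{j+1/2}^n − λ(𝐅_{j+1}^{n+1} − 𝐅_j^{n+1}) with values in [0,R] and numerical fluxes bounded by RL. Then for any smooth compactly supported μ_ℓ with ‖μ_ℓ‖_{L¹}, TV(μ_ℓ) ≤ K, the function ξ(t) = ∫_ℝ ρ_Δ(x,t) μ_ℓ(x) dx satisfies |ξ(t) − ξ(s)| ≤ R·L·K·(|t−s| + 2Δt) for all t, s ∈ [0,T]; consequently, for μ ∈ BV, ξ_Δ(t) = ∫ ρ_Δ μ has total variation on [0,T] at most 3RLK(T + Δt). -/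

import Mathlib

open MeasureTheory Set Filter Topology


lemma var_sum_aux (μ : ℝ → ℝ) (K : ℝ) (hK : 0 ≤ K)
    (hvar : eVariationOn μ Set.univ ≤ ENNReal.ofReal K)
    (N : ℕ) (y : ℕ → ℝ) (hy : Monotone y) :
    ∑ i ∈ Finset.range N, |μ (y (i+1)) - μ (y i)| ≤ K := by
  have h := eVariationOn.sum_le (f := μ) (n := N) hy (fun i => Set.mem_univ _)
  have heq : ∑ i ∈ Finset.range N, edist (μ (y (i+1))) (μ (y i))
      = ENNReal.ofReal (∑ i ∈ Finset.range N, |μ (y (i+1)) - μ (y i)|) := by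
    rw [ENNReal.ofReal_sum_of_nonneg (fun i _ => abs_nonneg _)]
    refine Finset.sum_congr rfl fun i _ => ?_
    rw [edist_dist, Real.dist_eq]
  rw [heq] at h
  have := h.trans hvar
  rwa [ENNReal.ofReal_le_ofReal_iff hK] at this

lemma trans_L1_aux (μ : ℝ → ℝ) (hμ : Integrable μ) (K h : ℝ) (hK : 0 ≤ K) (hh : 0 < h)
    (hvar : eVariationOn μ Set.univ ≤ ENNReal.ofReal K) :
    ∫ x, |μ (x - h) - μ x| ≤ h * K := by
  set φ : ℝ → ℝ := fun x => |μ (x - h) - μ x| with hφ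
  have hφi : Integrable φ := ((hμ.comp_sub_right h).sub hμ).abs
  have key : ∀ N : ℕ, (∫ x in (-(N:ℝ)*h)..((N:ℝ)*h), φ x) ≤ h * K := by
    intro N
    set a : ℕ → ℝ := fun k => ((k:ℝ) - N) * h with ha
    have ha0 : a 0 = -(N:ℝ)*h := by simp [ha]
    have haN : a (2*N) = (N:ℝ)*h := by push_cast [ha]; ring
    have hsum : ∑ k ∈ Finset.range (2*N), (∫ x in (a k)..(a (k+1)), φ x)
        = ∫ x in (a 0)..(a (2*N)), φ x :=
      intervalIntegral.sum_integral_adjacent_intervals (fun k _ => hφi.intervalIntegrable)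
    have hpiece : ∀ k : ℕ, (∫ x in (a k)..(a (k+1)), φ x) = ∫ u in (0:ℝ)..h, φ (u + a k) := by
      intro k
      rw [intervalIntegral.integral_comp_add_right φ (a k)]
      congr 1
      · simp
      · rw [ha]; push_cast; ring
    have hswap : ∑ k ∈ Finset.range (2*N), (∫ u in (0:ℝ)..h, φ (u + a k))
        = ∫ u in (0:ℝ)..h, ∑ k ∈ Finset.range (2*N), φ (u + a k) :=
      (intervalIntegral.integral_finset_sum (fun k _ => (hφi.comp_add_right (a k)).intervalIntegrable)).symm
    have hpt : ∀ u : ℝ, ∑ k ∈ Finset.range (2*N), φ (u + a k) ≤ K := by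
      intro u
      have hy : Monotone (fun i : ℕ => u + a i - h) := by
        intro i j hij
        simp only [ha]
        have : (i:ℝ) ≤ j := by exact_mod_cast hij
        nlinarith
      have := var_sum_aux μ K hK hvar (2*N) (fun i => u + a i - h) hy
      refine le_trans (le_of_eq ?_) this
      refine Finset.sum_congr rfl fun k _ => ?_
      have heq2 : u + a (k+1) - h = u + a k := by simp only [ha]; push_cast; ring
      show φ (u + a k) = |μ (u + a (k+1) - h) - μ (u + a k - h)|
      rw [heq2]
      simp only [hφ]
      rw [abs_sub_comm]
    have hend : (∫ u in (0:ℝ)..h, ∑ k ∈ Finset.range (2*N), φ (u + a k)) ≤ h * K := by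
      have hmono := intervalIntegral.integral_mono_on (μ := volume) hh.le
        ((integrable_finset_sum _ (fun k _ => hφi.comp_add_right (a k))).intervalIntegrable)
        (intervalIntegrable_const) (fun u _ => hpt u)
      calc (∫ u in (0:ℝ)..h, ∑ k ∈ Finset.range (2*N), φ (u + a k)) ≤ ∫ _ in (0:ℝ)..h, K := hmono
        _ = h * K := by rw [intervalIntegral.integral_const]; simp [smul_eq_mul]
    calc (∫ x in (-(N:ℝ)*h)..((N:ℝ)*h), φ x) = ∑ k ∈ Finset.range (2*N), (∫ x in (a k)..(a (k+1)), φ x) := by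
          rw [hsum, ha0, haN]
      _ = ∑ k ∈ Finset.range (2*N), (∫ u in (0:ℝ)..h, φ (u + a k)) := Finset.sum_congr rfl fun k _ => hpiece k
      _ = ∫ u in (0:ℝ)..h, ∑ k ∈ Finset.range (2*N), φ (u + a k) := hswap
      _ ≤ h * K := hend
  have htend : Tendsto (fun N : ℕ => ∫ x in (-(N:ℝ)*h)..((N:ℝ)*h), φ x) atTop (𝓝 (∫ x, φ x)) :=
    intervalIntegral_tendsto_integral hφi
      (by
        have h1 : Tendsto (fun N : ℕ => (N:ℝ)*h) atTop atTop :=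
          (tendsto_natCast_atTop_atTop).atTop_mul_const hh
        have := tendsto_neg_atTop_atBot.comp h1
        simpa [Function.comp_def, neg_mul] using this)
      ((tendsto_natCast_atTop_atTop).atTop_mul_const hh)
  exact le_of_tendsto htend (Filter.Eventually.of_forall key)

lemma step_bound_aux (R L K Δx Δt : ℝ) (hR : 0 < R) (hK : 0 ≤ K)
    (hΔx : 0 < Δx) (hΔt : 0 < Δt)
    (ρ : ℕ → ℤ → ℝ) (Fl : ℕ → ℤ → ℝ → ℝ → ℝ)
    (hρbd : ∀ n j, ρ n j ∈ Icc 0 R)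
    (hFlbd : ∀ n j a b, a ∈ Icc (0:ℝ) R → b ∈ Icc (0:ℝ) R → |Fl n j a b| ≤ R * L)
    (hscheme : ∀ n j, ρ (n+1) j
      = ρ n j - (Δt/Δx) * (Fl (n+1) (j+1) (ρ n j) (ρ n (j+1))
                            - Fl (n+1) j (ρ n (j-1)) (ρ n j)))
    (μ : ℝ → ℝ) (hμ : Integrable μ)
    (hvar : eVariationOn μ Set.univ ≤ ENNReal.ofReal K) (n : ℕ) :
    |(∫ x, ρ (n+1) ⌊x/Δx⌋ * μ x) - ∫ x, ρ n ⌊x/Δx⌋ * μ x| ≤ R*L*K*Δt := by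
  have hRL : 0 ≤ R * L := (abs_nonneg _).trans (hFlbd 0 0 0 0 ⟨le_refl 0, hR.le⟩ ⟨le_refl 0, hR.le⟩)
  -- generic integrability
  have mble : ∀ ψ : ℤ → ℝ, Measurable (fun x : ℝ => ψ ⌊x/Δx⌋) := by
    intro ψ
    have mψ : Measurable ψ := fun _ _ => trivial
    exact mψ.comp (Int.measurable_floor.comp (measurable_id.div_const Δx))
  have integ : ∀ (ψ : ℤ → ℝ) (B : ℝ), (∀ j, |ψ j| ≤ B) →
      Integrable (fun x => ψ ⌊x/Δx⌋ * μ x) := by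
    intro ψ B hB
    exact hμ.bdd_mul (mble ψ).aestronglyMeasurable (c := B) (Filter.Eventually.of_forall fun x => by
      simpa [Real.norm_eq_abs] using hB ⌊x/Δx⌋)
  set G : ℤ → ℝ := fun j => Fl (n+1) j (ρ n (j-1)) (ρ n j) with hG
  have hGbd : ∀ j, |G j| ≤ R * L := fun j => hFlbd _ _ _ _ (hρbd n (j-1)) (hρbd n j)
  have hρR : ∀ m : ℕ, ∀ j, |ρ m j| ≤ R := fun m j => by
    have := hρbd m j; rw [abs_le]; constructor <;> [linarith [this.1]; exact this.2]
  have int_n : Integrable (fun x => ρ n ⌊x/Δx⌋ * μ x) := integ _ R (hρR n)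
  have int_n1 : Integrable (fun x => ρ (n+1) ⌊x/Δx⌋ * μ x) := integ _ R (hρR (n+1))
  have int_G : Integrable (fun x => G ⌊x/Δx⌋ * μ x) := integ G (R*L) hGbd
  have int_G1 : Integrable (fun x => G (⌊x/Δx⌋+1) * μ x) :=
    integ (fun j => G (j+1)) (R*L) (fun j => hGbd (j+1))
  have int_diff : Integrable (fun x => G (⌊x/Δx⌋+1) * μ x - G ⌊x/Δx⌋ * μ x) := int_G1.sub int_G
  -- the scheme identity under the integral
  have hfun : (fun x => ρ (n+1) ⌊x/Δx⌋ * μ x)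
      = fun x => ρ n ⌊x/Δx⌋ * μ x - (Δt/Δx) * (G (⌊x/Δx⌋+1) * μ x - G ⌊x/Δx⌋ * μ x) := by
    funext x
    rw [hscheme n ⌊x/Δx⌋]
    have : G (⌊x/Δx⌋+1) = Fl (n+1) (⌊x/Δx⌋+1) (ρ n ⌊x/Δx⌋) (ρ n (⌊x/Δx⌋+1)) := by
      simp [hG]
    rw [this]
    ring
  have hsplit : (∫ x, ρ (n+1) ⌊x/Δx⌋ * μ x)
      = (∫ x, ρ n ⌊x/Δx⌋ * μ x) - (Δt/Δx) * ∫ x, (G (⌊x/Δx⌋+1) * μ x - G ⌊x/Δx⌋ * μ x) := by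
    rw [hfun, integral_sub int_n (int_diff.const_mul _), integral_const_mul]
  -- shift identity
  have hshift : (∫ x, G (⌊x/Δx⌋+1) * μ x) = ∫ x, G ⌊x/Δx⌋ * μ (x - Δx) := by
    have := integral_add_right_eq_self (μ := volume) (fun y => G ⌊y/Δx⌋ * μ (y - Δx)) Δx
    rw [← this]
    congr 1
    funext x
    have hfl : ⌊(x + Δx)/Δx⌋ = ⌊x/Δx⌋ + 1 := by
      rw [add_div, div_self hΔx.ne', Int.floor_add_one]
    rw [hfl]
    simp
  have int_Gshift : Integrable (fun x => G ⌊x/Δx⌋ * μ (x - Δx)) :=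
    (hμ.comp_sub_right Δx).bdd_mul (mble G).aestronglyMeasurable
      (c := R*L) (Filter.Eventually.of_forall fun x => by simpa [Real.norm_eq_abs] using hGbd ⌊x/Δx⌋)
  have hsub : (∫ x, (G (⌊x/Δx⌋+1) * μ x - G ⌊x/Δx⌋ * μ x))
      = ∫ x, G ⌊x/Δx⌋ * (μ (x - Δx) - μ x) := by
    rw [integral_sub int_G1 int_G, hshift, ← integral_sub int_Gshift int_G]
    congr 1; funext x; ring
  have hμdiff : Integrable (fun x => |μ (x - Δx) - μ x|) := ((hμ.comp_sub_right Δx).sub hμ).abs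
  have hI : (∫ x, |μ (x - Δx) - μ x|) ≤ Δx * K := trans_L1_aux μ hμ K Δx hK hΔx hvar
  have int_Gd : Integrable (fun x => G ⌊x/Δx⌋ * (μ (x - Δx) - μ x)) := by
    have := int_Gshift.sub int_G
    refine this.congr (Filter.Eventually.of_forall fun x => ?_)
    simp only [Pi.sub_apply]
    ring
  have habs : |∫ x, G ⌊x/Δx⌋ * (μ (x - Δx) - μ x)| ≤ R*L*(Δx*K) := by
    have h1 : |∫ x, G ⌊x/Δx⌋ * (μ (x - Δx) - μ x)|
        ≤ ∫ x, |G ⌊x/Δx⌋ * (μ (x - Δx) - μ x)| := by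
      have := norm_integral_le_integral_norm (μ := volume)
        (fun x => G ⌊x/Δx⌋ * (μ (x - Δx) - μ x))
      simpa [Real.norm_eq_abs, abs_mul] using this
    have h2 : (∫ x, |G ⌊x/Δx⌋ * (μ (x - Δx) - μ x)|) ≤ ∫ x, (R*L) * |μ (x - Δx) - μ x| := by
      refine integral_mono int_Gd.abs (hμdiff.const_mul _) fun x => ?_
      rw [abs_mul]
      exact mul_le_mul_of_nonneg_right (hGbd _) (abs_nonneg _)
    have h3 : (∫ x, (R*L) * |μ (x - Δx) - μ x|) = (R*L) * ∫ x, |μ (x - Δx) - μ x| :=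
      integral_const_mul _ _
    calc |∫ x, G ⌊x/Δx⌋ * (μ (x - Δx) - μ x)| ≤ ∫ x, (R*L) * |μ (x - Δx) - μ x| := h1.trans h2
      _ = (R*L) * ∫ x, |μ (x - Δx) - μ x| := h3
      _ ≤ R*L*(Δx*K) := mul_le_mul_of_nonneg_left hI hRL
  have hI2 : |∫ x, (G (⌊x/Δx⌋+1) * μ x - G ⌊x/Δx⌋ * μ x)| ≤ R*L*(Δx*K) := by
    rw [hsub]; exact habs
  have h0 : 0 ≤ Δt/Δx := by positivity
  calc |(∫ x, ρ (n+1) ⌊x/Δx⌋ * μ x) - ∫ x, ρ n ⌊x/Δx⌋ * μ x|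
      = (Δt/Δx) * |∫ x, (G (⌊x/Δx⌋+1) * μ x - G ⌊x/Δx⌋ * μ x)| := by
        rw [hsplit]
        have heq : (∫ x, ρ n ⌊x/Δx⌋ * μ x)
            - (Δt/Δx) * (∫ x, (G (⌊x/Δx⌋+1) * μ x - G ⌊x/Δx⌋ * μ x))
            - (∫ x, ρ n ⌊x/Δx⌋ * μ x)
            = -((Δt/Δx) * ∫ x, (G (⌊x/Δx⌋+1) * μ x - G ⌊x/Δx⌋ * μ x)) := by ring
        rw [heq, abs_neg, abs_mul, abs_of_nonneg h0]
    _ ≤ (Δt/Δx) * (R*L*(Δx*K)) := mul_le_mul_of_nonneg_left hI2 h0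
    _ = R*L*K*Δt := by field_simp


lemma multi_step_aux (C : ℝ) (hC : 0 ≤ C) (ξ : ℕ → ℝ)
    (hstep : ∀ n, |ξ (n+1) - ξ n| ≤ C) :
    ∀ m p : ℕ, m ≤ p → |ξ p - ξ m| ≤ C * ((p : ℝ) - (m : ℝ)) := by
  intro m p hmp
  induction p, hmp using Nat.le_induction with
  | base => simp
  | succ p hmp ih =>
    have h1 := hstep p
    have h2 : |ξ (p+1) - ξ m| ≤ |ξ (p+1) - ξ p| + |ξ p - ξ m| := abs_sub_le _ _ _
    have hcast : ((p+1 : ℕ) : ℝ) - (m:ℝ) = ((p:ℝ) - m) + 1 := by push_cast; ring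
    rw [hcast, mul_add, mul_one]
    linarith


/-- Lemma `bus_BV_VF`: for the conservative scheme with numerical fluxes bounded by `RL`
and values in `[0,R]`, and any smooth compactly supported weight `μ_ℓ` with
`‖μ_ℓ‖_{L¹}, TV(μ_ℓ) ≤ K`, the function `ξ(t) = ∫ ρ_Δ(x,t) μ_ℓ(x) dx` satisfies
`|ξ(t) − ξ(s)| ≤ RLK(|t−s| + 2Δt)`; consequently, for `μ ∈ BV` with the same bounds,
`ξ_Δ(t) = ∫ ρ_Δ μ` has total variation on `[0,T]` at most `3RLK(T + Δt)`. -/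
theorem stmt_12
    (T R L K Δx Δt : ℝ) (hT : 0 < T) (hR : 0 < R) (hL : 0 < L) (hK : 0 < K)
    (hΔx : 0 < Δx) (hΔt : 0 < Δt)
    (ρ : ℕ → ℤ → ℝ) (Fl : ℕ → ℤ → ℝ → ℝ → ℝ)
    (hρbd : ∀ n j, ρ n j ∈ Icc 0 R)
    (hFlbd : ∀ n j a b, a ∈ Icc (0:ℝ) R → b ∈ Icc (0:ℝ) R → |Fl n j a b| ≤ R * L)
    (hscheme : ∀ n j, ρ (n+1) j
      = ρ n j - (Δt/Δx) * (Fl (n+1) (j+1) (ρ n j) (ρ n (j+1))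
                            - Fl (n+1) j (ρ n (j-1)) (ρ n j)))
    (ρΔ : ℝ → ℝ → ℝ)
    (hρΔ : ∀ x t, ρΔ x t = ρ (⌊t/Δt⌋.toNat) ⌊x/Δx⌋) :
    (∀ μl : ℝ → ℝ, ContDiff ℝ (⊤ : ℕ∞) μl → HasCompactSupport μl →
      (∫ x, |μl x|) ≤ K → eVariationOn μl Set.univ ≤ ENNReal.ofReal K →
      ∀ t ∈ Icc (0:ℝ) T, ∀ s ∈ Icc (0:ℝ) T,
        |(∫ x, ρΔ x t * μl x) - ∫ x, ρΔ x s * μl x| ≤ R*L*K*(|t - s| + 2*Δt)) ∧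
    (∀ μ : ℝ → ℝ, Integrable μ →
      (∫ x, |μ x|) ≤ K → eVariationOn μ Set.univ ≤ ENNReal.ofReal K →
      eVariationOn (fun t => ∫ x, ρΔ x t * μ x) (Icc 0 T)
        ≤ ENNReal.ofReal (3*R*L*K*(T + Δt))) := by
  have hK0 : (0:ℝ) ≤ K := hK.le
  set C : ℝ := R*L*K*Δt with hC
  have hRLK : (0:ℝ) ≤ R*L*K := by
    have hRL : 0 ≤ R * L := (abs_nonneg _).trans
      (hFlbd 0 0 0 0 ⟨le_refl 0, hR.le⟩ ⟨le_refl 0, hR.le⟩)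
    positivity
  have hCpos : 0 ≤ C := by rw [hC]; positivity
  -- the time-index function
  set nt : ℝ → ℕ := fun t => (⌊t/Δt⌋).toNat with hnt
  have hnt_mono : ∀ s t : ℝ, s ≤ t → nt s ≤ nt t := by
    intro s t hst
    exact Int.toNat_le_toNat (Int.floor_le_floor (by gcongr))
  have hnt_le : ∀ t : ℝ, 0 ≤ t → (nt t : ℝ) ≤ t/Δt := by
    intro t ht
    have h0 : (0:ℤ) ≤ ⌊t/Δt⌋ := Int.floor_nonneg.mpr (by positivity)
    have : ((nt t : ℤ) : ℝ) = ((⌊t/Δt⌋ : ℤ) : ℝ) := by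
      rw [hnt]; norm_cast; exact Int.toNat_of_nonneg h0
    push_cast at this
    rw [this]
    exact Int.floor_le _
  have hnt_ge : ∀ t : ℝ, 0 ≤ t → t/Δt - 1 ≤ (nt t : ℝ) := by
    intro t ht
    have h0 : (0:ℤ) ≤ ⌊t/Δt⌋ := Int.floor_nonneg.mpr (by positivity)
    have h1 : ((nt t : ℤ) : ℝ) = ((⌊t/Δt⌋ : ℤ) : ℝ) := by
      rw [hnt]; norm_cast; exact Int.toNat_of_nonneg h0
    push_cast at h1
    rw [h1]
    linarith [Int.sub_one_lt_floor (t/Δt)]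
  -- the key per-pair estimate, for any admissible weight
  have main : ∀ μ : ℝ → ℝ, Integrable μ →
      eVariationOn μ Set.univ ≤ ENNReal.ofReal K →
      ∀ s t : ℝ, 0 ≤ s → s ≤ t →
        |(∫ x, ρΔ x t * μ x) - ∫ x, ρΔ x s * μ x|
          ≤ C * ((nt t : ℝ) - (nt s : ℝ)) := by
    intro μ hμ hvar s t hs hst
    have hstep : ∀ n, |(∫ x, ρ (n+1) ⌊x/Δx⌋ * μ x) - ∫ x, ρ n ⌊x/Δx⌋ * μ x| ≤ C :=
      fun n => step_bound_aux R L K Δx Δt hR hK0 hΔx hΔt ρ Fl hρbd hFlbd hscheme μ hμ hvar n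
    have hmulti := multi_step_aux C hCpos (fun n => ∫ x, ρ n ⌊x/Δx⌋ * μ x) hstep
      (nt s) (nt t) (hnt_mono s t hst)
    have heqt : (∫ x, ρΔ x t * μ x) = ∫ x, ρ (nt t) ⌊x/Δx⌋ * μ x := by
      simp only [hρΔ, hnt]
    have heqs : (∫ x, ρΔ x s * μ x) = ∫ x, ρ (nt s) ⌊x/Δx⌋ * μ x := by
      simp only [hρΔ, hnt]
    rw [heqt, heqs]
    exact hmulti
  constructor
  · -- part 1
    intro μl hsmooth hsupp hL1 hvar t ht s hs
    have hμint : Integrable μl := (hsmooth.continuous).integrable_of_hasCompactSupport hsupp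
    -- reduce to the ordered case
    have key : ∀ a b : ℝ, a ∈ Icc (0:ℝ) T → b ∈ Icc (0:ℝ) T → a ≤ b →
        |(∫ x, ρΔ x b * μl x) - ∫ x, ρΔ x a * μl x| ≤ R*L*K*(|b - a| + 2*Δt) := by
      intro a b ha hb hab
      have h1 := main μl hμint hvar a b ha.1 hab
      have h2 : (nt b : ℝ) - (nt a : ℝ) ≤ (b - a)/Δt + 1 := by
        have := hnt_le b (ha.1.trans hab)
        have := hnt_ge a ha.1
        have hd : b/Δt - a/Δt = (b-a)/Δt := by ring
        linarith
      have h3 : C * ((nt b : ℝ) - (nt a : ℝ)) ≤ C * ((b - a)/Δt + 1) :=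
        mul_le_mul_of_nonneg_left h2 hCpos
      have h4 : C * ((b - a)/Δt + 1) = R*L*K*((b-a) + Δt) := by
        rw [hC]; field_simp
      have h5 : |b - a| = b - a := abs_of_nonneg (by linarith)
      have h6 : R*L*K*((b-a) + Δt) ≤ R*L*K*(|b - a| + 2*Δt) := by
        rw [h5]
        apply mul_le_mul_of_nonneg_left _ hRLK
        linarith
      linarith
    rcases le_total s t with hst | hst
    · exact key s t hs ht hst
    · have h := key t s ht hs hst
      rw [abs_sub_comm (∫ x, ρΔ x s * μl x), abs_sub_comm s t] at h
      exact h
  · -- part 2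
    intro μ hμ hL1 hvar
    have hfeq : (fun t => ∫ x, ρΔ x t * μ x) = fun t => ∫ x, ρ (nt t) ⌊x/Δx⌋ * μ x := by
      funext t; simp only [hρΔ, hnt]
    rw [eVariationOn]
    apply iSup_le
    rintro ⟨n, u, hu, hus⟩
    -- convert the edist sum to a real sum
    have hconv : ∑ i ∈ Finset.range n,
        edist ((fun t => ∫ x, ρΔ x t * μ x) (u (i+1))) ((fun t => ∫ x, ρΔ x t * μ x) (u i))
        = ENNReal.ofReal (∑ i ∈ Finset.range n,
            |(∫ x, ρΔ x (u (i+1)) * μ x) - ∫ x, ρΔ x (u i) * μ x|) := by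
      rw [ENNReal.ofReal_sum_of_nonneg (fun i _ => abs_nonneg _)]
      exact Finset.sum_congr rfl fun i _ => by rw [edist_dist, Real.dist_eq]
    rw [hconv]
    apply ENNReal.ofReal_le_ofReal
    -- bound the real sum
    have hsum1 : ∑ i ∈ Finset.range n,
        |(∫ x, ρΔ x (u (i+1)) * μ x) - ∫ x, ρΔ x (u i) * μ x|
        ≤ ∑ i ∈ Finset.range n, C * ((nt (u (i+1)) : ℝ) - (nt (u i) : ℝ)) := by
      apply Finset.sum_le_sum
      intro i _
      exact main μ hμ hvar (u i) (u (i+1)) (hus i).1 (hu (Nat.le_succ i))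
    have hsum2 : ∑ i ∈ Finset.range n, C * ((nt (u (i+1)) : ℝ) - (nt (u i) : ℝ))
        = C * ((nt (u n) : ℝ) - (nt (u 0) : ℝ)) := by
      rw [← Finset.mul_sum, Finset.sum_range_sub (fun i => (nt (u i) : ℝ))]
    have hbd : C * ((nt (u n) : ℝ) - (nt (u 0) : ℝ)) ≤ 3*R*L*K*(T + Δt) := by
      have h1 : (nt (u n) : ℝ) ≤ T/Δt := by
        have ha := hnt_le (u n) (hus n).1
        have hT' : u n ≤ T := (hus n).2
        have hb : u n / Δt ≤ T / Δt := by gcongr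
        linarith
      have h2 : (0:ℝ) ≤ (nt (u 0) : ℝ) := Nat.cast_nonneg _
      have h3 : C * ((nt (u n) : ℝ) - (nt (u 0) : ℝ)) ≤ C * (T/Δt) :=
        mul_le_mul_of_nonneg_left (by linarith) hCpos
      have h4 : C * (T/Δt) = R*L*K*T := by rw [hC]; field_simp
      have h5 : R*L*K*T ≤ 3*R*L*K*(T + Δt) := by nlinarith [hRLK, hT.le, hΔt.le]
      linarith
    linarith
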